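/- Let P = [a] × [2b] with the described partial order, and let 1 ≤ t ≤ a-1. Then the maximum cardinality of a subset of P containing no chain of t+1 elements is (a+b)t. -/

import Mathlib

/-- A step moves one unit down `(1,0)` or one unit left `(0,-1)`. -/
def Step (p q : ℤ × ℤ) : Prop := q = p + (1, 0) ∨ q = p + (0, -1)

/-- `l` is a path starting at `p` and ending at `q`, each consecutive
difference being `(1,0)` or `(0,-1)`. -/
def IsPathFromTo (l : List (ℤ × ℤ)) (p q : ℤ × ℤ) : Prop :=
  l.Chain' Step ∧ l.head? = some p ∧ l.getLast? = some q

/-- Membership in the poset `P = [a] × [2b]`, viewed inside `ℤ × ℤ`. -/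
def memP (a b : ℕ) (p : ℤ × ℤ) : Prop :=
  1 ≤ p.1 ∧ p.1 ≤ (a : ℤ) ∧ 1 ≤ p.2 ∧ p.2 ≤ 2 * (b : ℤ)

/-- The partial order on `P = [a] × [2b]`:
`(x,y) ⪯ (z,t)` iff `(x,y) = (z,t)`, or `x < z` and `y < t`,
or `y ≤ b`, `t ≥ b+1` and `y < t - b`. -/
def ple (b : ℕ) (p q : ℤ × ℤ) : Prop :=
  p = q ∨ (p.1 < q.1 ∧ p.2 < q.2) ∨
    (p.2 ≤ (b : ℤ) ∧ (b : ℤ) + 1 ≤ q.2 ∧ p.2 < q.2 - (b : ℤ))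

/-! ### Auxiliary machinery -/

/-- Chain index: merge diagonal `d = y - x` with diagonal `d + a + b`. -/
def ff (a b : ℕ) (p : ℤ × ℤ) : ℤ :=
  if p.2 - p.1 ≤ (b:ℤ) then p.2 - p.1 else p.2 - p.1 - ((a:ℤ) + b)

lemma ff_mem {a b : ℕ} {p : ℤ × ℤ} (hp : memP a b p) :
    ff a b p ∈ Finset.Icc (1 - (a:ℤ)) (b:ℤ) := by
  obtain ⟨h1, h2, h3, h4⟩ := hp
  rw [Finset.mem_Icc, ff]
  split_ifs <;> omega

lemma ff_chain {a b : ℕ} {p q : ℤ × ℤ} (hp : memP a b p) (hq : memP a b q)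
    (hf : ff a b p = ff a b q) : ple b p q ∨ ple b q p := by
  obtain ⟨h1, h2, h3, h4⟩ := hp
  obtain ⟨h5, h6, h7, h8⟩ := hq
  simp only [ff] at hf
  simp only [ple, Prod.ext_iff]
  split_ifs at hf <;> omega

/-- The `j`-th antichain: a column of height `b+1` at `x = a+1-j` spanning
`y ∈ [b+1-j, 2b+1-j]`, plus a row at `y = b+1-j` to its right and a row at
`y = 2b+1-j` to its left. -/
noncomputable def AA (a b : ℕ) (j : ℤ) : Finset (ℤ × ℤ) :=
  ((Finset.Icc ((b:ℤ)+1-j) (2*(b:ℤ)+1-j)).image (fun y => ((a:ℤ)+1-j, y))) ∪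
  ((Finset.Icc ((a:ℤ)+2-j) (a:ℤ)).image (fun x => (x, (b:ℤ)+1-j))) ∪
  ((Finset.Icc (1:ℤ) ((a:ℤ)-j)).image (fun x => (x, 2*(b:ℤ)+1-j)))

lemma mem_AA {a b : ℕ} {j : ℤ} {p : ℤ × ℤ} :
    p ∈ AA a b j ↔
      (p.1 = (a:ℤ)+1-j ∧ (b:ℤ)+1-j ≤ p.2 ∧ p.2 ≤ 2*(b:ℤ)+1-j) ∨
      (p.2 = (b:ℤ)+1-j ∧ (a:ℤ)+2-j ≤ p.1 ∧ p.1 ≤ (a:ℤ)) ∨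
      (p.2 = 2*(b:ℤ)+1-j ∧ 1 ≤ p.1 ∧ p.1 ≤ (a:ℤ)-j) := by
  constructor
  · intro h
    rcases Finset.mem_union.mp h with h | h
    · rcases Finset.mem_union.mp h with h | h
      · obtain ⟨y, hy, heq⟩ := Finset.mem_image.mp h
        rw [Finset.mem_Icc] at hy
        left
        rw [← heq]
        exact ⟨rfl, hy.1, hy.2⟩
      · obtain ⟨x, hx, heq⟩ := Finset.mem_image.mp h
        rw [Finset.mem_Icc] at hx
        right; left
        rw [← heq]
        exact ⟨rfl, hx.1, hx.2⟩
    · obtain ⟨x, hx, heq⟩ := Finset.mem_image.mp h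
      rw [Finset.mem_Icc] at hx
      right; right
      rw [← heq]
      exact ⟨rfl, hx.1, hx.2⟩
  · intro h
    rcases h with ⟨h1, h2, h3⟩ | ⟨h1, h2, h3⟩ | ⟨h1, h2, h3⟩
    · exact Finset.mem_union.mpr <| Or.inl <| Finset.mem_union.mpr <| Or.inl <|
        Finset.mem_image.mpr ⟨p.2, Finset.mem_Icc.mpr ⟨h2, h3⟩, by rw [← h1]⟩
    · exact Finset.mem_union.mpr <| Or.inl <| Finset.mem_union.mpr <| Or.inr <|
        Finset.mem_image.mpr ⟨p.1, Finset.mem_Icc.mpr ⟨h2, h3⟩, by rw [← h1]⟩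
    · exact Finset.mem_union.mpr <| Or.inr <|
        Finset.mem_image.mpr ⟨p.1, Finset.mem_Icc.mpr ⟨h2, h3⟩, by rw [← h1]⟩

lemma AA_antichain {a b : ℕ} {j : ℤ} (h1 : 1 ≤ j) (hb : j ≤ (b:ℤ))
    {p q : ℤ × ℤ} (hp : p ∈ AA a b j) (hq : q ∈ AA a b j) (hne : p ≠ q) :
    ¬ ple b p q := by
  rw [mem_AA] at hp hq
  rw [Ne, Prod.ext_iff] at hne
  simp only [ple, Prod.ext_iff]
  omega

lemma AA_disjoint {a b : ℕ} {j k : ℤ} (h1 : 1 ≤ j) (hjb : j ≤ (b:ℤ))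
    (h2 : 1 ≤ k) (hkb : k ≤ (b:ℤ)) (hne : j ≠ k) :
    Disjoint (AA a b j) (AA a b k) := by
  rw [Finset.disjoint_left]
  intro p hp hq
  rw [mem_AA] at hp hq
  omega

lemma AA_subset_P {a b : ℕ} {j : ℤ} (h1 : 1 ≤ j) (hja : j ≤ (a:ℤ) - 1)
    (hab : a ≤ b) {p : ℤ × ℤ} (hp : p ∈ AA a b j) : memP a b p := by
  have : (a:ℤ) ≤ (b:ℤ) := by exact_mod_cast hab
  rw [mem_AA] at hp
  exact ⟨by omega, by omega, by omega, by omega⟩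

lemma AA_card {a b : ℕ} {j : ℤ} (h1 : 1 ≤ j) (hja : j ≤ (a:ℤ) - 1)
    (hab : a ≤ b) : (AA a b j).card = a + b := by
  have hab' : (a:ℤ) ≤ (b:ℤ) := by exact_mod_cast hab
  rw [AA]
  have hinj1 : Function.Injective (fun y : ℤ => ((a:ℤ)+1-j, y)) := by
    intro u v h
    simpa using h
  have hinj2 : Function.Injective (fun x : ℤ => (x, (b:ℤ)+1-j)) := by
    intro u v h
    simpa using h
  have hinj3 : Function.Injective (fun x : ℤ => (x, 2*(b:ℤ)+1-j)) := by
    intro u v h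
    simpa using h
  rw [Finset.card_union_of_disjoint, Finset.card_union_of_disjoint]
  · rw [Finset.card_image_of_injective _ hinj1, Finset.card_image_of_injective _ hinj2,
      Finset.card_image_of_injective _ hinj3, Int.card_Icc, Int.card_Icc, Int.card_Icc]
    omega
  · -- column disjoint from bottom row
    rw [Finset.disjoint_left]
    intro p hp hq
    obtain ⟨y, hy, heq⟩ := Finset.mem_image.mp hp
    obtain ⟨x, hx, heq'⟩ := Finset.mem_image.mp hq
    rw [← heq'] at heq
    rw [Finset.mem_Icc] at hx
    have := congrArg Prod.fst heq
    simp at this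
    omega
  · -- (column ∪ bottom row) disjoint from top row
    rw [Finset.disjoint_left]
    intro p hp hq
    obtain ⟨x, hx, heq'⟩ := Finset.mem_image.mp hq
    rw [Finset.mem_Icc] at hx
    rcases Finset.mem_union.mp hp with hp | hp
    · obtain ⟨y, hy, heq⟩ := Finset.mem_image.mp hp
      rw [← heq'] at heq
      have h1' := congrArg Prod.fst heq
      simp at h1'
      omega
    · obtain ⟨z, hz, heq⟩ := Finset.mem_image.mp hp
      rw [← heq'] at heq
      have h2' := congrArg Prod.snd heq
      simp at h2'
      omega

/-- The extremal set: union of the `t` antichains. -/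
noncomputable def SS (a b t : ℕ) : Finset (ℤ × ℤ) :=
  (Finset.Icc (1:ℤ) (t:ℤ)).biUnion (AA a b)

theorem stmt_10 (a b t : ℕ) (ha : 2 ≤ a) (hab : a ≤ b) (ht1 : 1 ≤ t) (hta : t ≤ a - 1) :
    IsGreatest {n | ∃ S : Finset (ℤ × ℤ), (∀ p ∈ S, memP a b p) ∧
      (∀ c : Finset (ℤ × ℤ), c ⊆ S → IsChain (ple b) (c : Set (ℤ × ℤ)) → c.card ≤ t) ∧
      S.card = n} ((a + b) * t) := by
  have hta' : (t:ℤ) ≤ (a:ℤ) - 1 := by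
    have : t ≤ a - 1 := hta
    omega
  have htb : (t:ℤ) ≤ (b:ℤ) := by
    have : (a:ℤ) ≤ (b:ℤ) := by exact_mod_cast hab
    omega
  constructor
  · -- membership: the set SS works
    refine ⟨SS a b t, ?_, ?_, ?_⟩
    · intro p hp
      obtain ⟨j, hj, hpj⟩ := Finset.mem_biUnion.mp hp
      rw [Finset.mem_Icc] at hj
      exact AA_subset_P hj.1 (le_trans hj.2 hta') hab hpj
    · -- no chain with more than t elements
      intro c hc hchain
      have hsub : c ⊆ (Finset.Icc (1:ℤ) (t:ℤ)).biUnion (fun j => c ∩ AA a b j) := by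
        intro p hp
        obtain ⟨j, hj, hpj⟩ := Finset.mem_biUnion.mp (hc hp)
        exact Finset.mem_biUnion.mpr ⟨j, hj, Finset.mem_inter.mpr ⟨hp, hpj⟩⟩
      calc c.card ≤ ((Finset.Icc (1:ℤ) (t:ℤ)).biUnion (fun j => c ∩ AA a b j)).card :=
              Finset.card_le_card hsub
        _ ≤ ∑ j ∈ Finset.Icc (1:ℤ) (t:ℤ), (c ∩ AA a b j).card := Finset.card_biUnion_le
        _ ≤ ∑ _j ∈ Finset.Icc (1:ℤ) (t:ℤ), 1 := by
              refine Finset.sum_le_sum fun j hj => ?_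
              rw [Finset.mem_Icc] at hj
              rw [Finset.card_le_one]
              intro p hp q hq
              by_contra hne
              rcases hchain (Finset.mem_coe.mpr (Finset.mem_inter.mp hp).1)
                  (Finset.mem_coe.mpr (Finset.mem_inter.mp hq).1) hne with h | h
              · exact AA_antichain hj.1 (le_trans hj.2 htb)
                  (Finset.mem_inter.mp hp).2 (Finset.mem_inter.mp hq).2 hne h
              · exact AA_antichain hj.1 (le_trans hj.2 htb)
                  (Finset.mem_inter.mp hq).2 (Finset.mem_inter.mp hp).2 (Ne.symm hne) h
        _ = t := by rw [Finset.sum_const, Int.card_Icc, smul_eq_mul, mul_one]; omega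
    · -- cardinality of SS
      rw [SS, Finset.card_biUnion]
      · rw [Finset.sum_congr rfl (fun j hj => ?_)]
        · rw [Finset.sum_const, Int.card_Icc]
          have : ((t:ℤ) + 1 - 1).toNat = t := by omega
          rw [this, smul_eq_mul, Nat.mul_comm]
        · rw [Finset.mem_Icc] at hj
          exact AA_card hj.1 (le_trans hj.2 hta') hab
      · intro j hj k hk hne
        rw [Finset.mem_coe, Finset.mem_Icc] at hj hk
        exact AA_disjoint hj.1 (le_trans hj.2 htb) hk.1 (le_trans hk.2 htb) hne
  · -- upper bound
    rintro n ⟨S, hSP, hchains, rfl⟩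
    rw [Finset.card_eq_sum_card_fiberwise (f := ff a b)
      (t := Finset.Icc (1 - (a:ℤ)) (b:ℤ)) (fun p hp => ff_mem (hSP p hp))]
    calc ∑ i ∈ Finset.Icc (1 - (a:ℤ)) (b:ℤ), (S.filter (fun p => ff a b p = i)).card
        ≤ ∑ _i ∈ Finset.Icc (1 - (a:ℤ)) (b:ℤ), t := by
          refine Finset.sum_le_sum fun i _ => ?_
          refine hchains _ (Finset.filter_subset _ _) ?_
          intro p hp q hq hne
          rw [Finset.mem_coe, Finset.mem_filter] at hp hq
          exact ff_chain (hSP p hp.1) (hSP q hq.1) (hp.2.trans hq.2.symm)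
      _ = (a + b) * t := by
          rw [Finset.sum_const, Int.card_Icc, smul_eq_mul]
          have : ((b:ℤ) + 1 - (1 - (a:ℤ))).toNat = a + b := by omega
          rw [this]
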